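/- The class of finite ordered σ_1-structures satisfying SomeTotalR_1 is closed under extensions within finite ordered structures: if a finite ordered σ_1-structure A satisfies SomeTotalR_1 and A is a substructure of a finite ordered σ_1-structure B, then B satisfies SomeTotalR_1. -/

import Mathlib

open FirstOrder Language

namespace Paper

variable {L : FirstOrder.Language} {α : Type*}

/-! ### Prefix classes `Σ_{n,k}` and `Π_{n,k}` -/

/-- Prepend a block of `j` existential quantifiers to a bounded formula. -/
def exN : ∀ (j : ℕ) {m : ℕ}, L.BoundedFormula α (m + j) → L.BoundedFormula α m
  | 0, _, φ => φ
  | j + 1, _, φ => exN j φ.ex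

/-- Prepend a block of `j` universal quantifiers to a bounded formula. -/
def allN : ∀ (j : ℕ) {m : ℕ}, L.BoundedFormula α (m + j) → L.BoundedFormula α m
  | 0, _, φ => φ
  | j + 1, _, φ => allN j φ.all

/-- `IsSigmaPi k b n m φ` says that the formula `φ` is in prenex form with at most `n`
alternating blocks of at most `k` quantifiers, starting with an existential block when
`b = true` (the class `Σ_{n,k}`) and with a universal block when `b = false` (`Π_{n,k}`). -/
def IsSigmaPi (k : ℕ) : Bool → ℕ → ∀ m : ℕ, L.BoundedFormula α m → Prop
  | _, 0, _, φ => φ.IsQF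
  | b, n + 1, m, φ =>
      IsSigmaPi k (!b) n m φ ∨
        ∃ j : ℕ, j ≤ k ∧ ∃ ψ : L.BoundedFormula α (m + j),
          IsSigmaPi k (!b) n (m + j) ψ ∧ φ = if b then exN j ψ else allN j ψ

/-- `φ` is a `Σ_{n,k}` formula. -/
abbrev IsSigma (n k : ℕ) {m : ℕ} (φ : L.BoundedFormula α m) : Prop :=
  IsSigmaPi k true n m φ

/-- `φ` is a `Π_{n,k}` formula. -/
abbrev IsPi (n k : ℕ) {m : ℕ} (φ : L.BoundedFormula α m) : Prop :=
  IsSigmaPi k false n m φ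

/-! ### The relations `⇛_{n,k}` and `≡_{n,k}` -/

/-- `A ⇛_{n,k} B` : every `Σ_{n,k}` sentence true in `A` is true in `B`. -/
def SigImp (L : FirstOrder.Language) (n k : ℕ) (A : Type*) (B : Type*)
    [L.Structure A] [L.Structure B] : Prop :=
  ∀ φ : L.Sentence, IsSigma n k φ → A ⊨ φ → B ⊨ φ

/-- `A ≡_{n,k} B`. -/
def SigEquiv (L : FirstOrder.Language) (n k : ℕ) (A : Type*) (B : Type*)
    [L.Structure A] [L.Structure B] : Prop :=
  SigImp L n k A B ∧ SigImp L n k B A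

/-- `(A, ā) ⇛_{n,k} (B, b̄)` : every `Σ_{n,k}` formula satisfied by `ā` in `A` is satisfied
by `b̄` in `B`. -/
def SigImpT (L : FirstOrder.Language) (n k : ℕ) {l : ℕ} (A : Type*) [L.Structure A]
    (a : Fin l → A) (B : Type*) [L.Structure B] (b : Fin l → B) : Prop :=
  ∀ φ : L.Formula (Fin l), IsSigma n k φ → φ.Realize a → φ.Realize b

/-! ### Quantifier rank -/

/-- The quantifier rank of a formula. -/
def qrank : ∀ {m : ℕ}, L.BoundedFormula α m → ℕ
  | _, BoundedFormula.falsum => 0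
  | _, BoundedFormula.equal _ _ => 0
  | _, BoundedFormula.rel _ _ => 0
  | _, BoundedFormula.imp f g => max (qrank f) (qrank g)
  | _, BoundedFormula.all f => qrank f + 1

/-- `A ≡_m B` : `A` and `B` satisfy the same sentences of quantifier rank at most `m`. -/
def RankEquiv (L : FirstOrder.Language) (m : ℕ) (A : Type*) (B : Type*)
    [L.Structure A] [L.Structure B] : Prop :=
  ∀ φ : L.Sentence, qrank φ ≤ m → (A ⊨ φ ↔ B ⊨ φ)

/-! ### Ordered structures -/

/-- The interpretation of a distinguished binary relation symbol. -/
def rle (le : L.Relations 2) {A : Type*} [L.Structure A] (x y : A) : Prop :=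
  Structure.RelMap le ![x, y]

/-- The distinguished binary relation symbol `le` is interpreted as a linear order. -/
def IsOrderedLe (le : L.Relations 2) (A : Type*) [L.Structure A] : Prop :=
  (∀ x : A, rle le x x) ∧
    (∀ x y : A, rle le x y → rle le y x → x = y) ∧
    (∀ x y z : A, rle le x y → rle le y z → rle le x z) ∧
    (∀ x y : A, rle le x y ∨ rle le y x)

/-- `x` is the minimum element w.r.t. the interpretation of `le`. -/
def IsMinimal (le : L.Relations 2) {A : Type*} [L.Structure A] (x : A) : Prop :=
  ∀ y, rle le x y

/-- `x` is the maximum element w.r.t. the interpretation of `le`. -/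
def IsMaximal (le : L.Relations 2) {A : Type*} [L.Structure A] (x : A) : Prop :=
  ∀ y, rle le y x

/-- The function `ρ`: `ρ(1,k) = 2k+2` and `ρ(n+1,k) = (k+2)(ρ(n,k)+1)`. -/
def rho : ℕ → ℕ → ℕ
  | 0, _ => 0
  | 1, k => 2 * k + 2
  | n + 2, k => (k + 2) * (rho (n + 1) k + 1)

/-! ### Starred structures:  `A*` is `A` with constants for its min and max elements.
Satisfaction of (prefix-class) sentences of the enlarged vocabulary in `A*` corresponds to
satisfaction of (prefix-class) formulas in two extra free variables, instantiated to the
minimum and the maximum. -/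

/-- `A* ⇛_{n,k} B*`. -/
def SigImpStar (L : FirstOrder.Language) (n k : ℕ) (A : Type*) [L.Structure A]
    (mnA mxA : A) (B : Type*) [L.Structure B] (mnB mxB : B) : Prop :=
  SigImpT L n k A ![mnA, mxA] B ![mnB, mxB]

/-- The tuple `ā` extended by the two distinguished constants. -/
def starT {A : Type*} {l : ℕ} (a : Fin l → A) (mn mx : A) : Fin (l + 2) → A :=
  Fin.append a ![mn, mx]

/-- `(A, ā)* ⇛_{n,k} (B, b̄)*`. -/
def SigImpTStar (L : FirstOrder.Language) (n k : ℕ) {l : ℕ} (A : Type*) [L.Structure A]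
    (a : Fin l → A) (mnA mxA : A) (B : Type*) [L.Structure B] (b : Fin l → B)
    (mnB mxB : B) : Prop :=
  SigImpT L n k A (starT a mnA mxA) B (starT b mnB mxB)

/-! ### Ordered sums -/

/-- `C`, together with the inclusion maps `f : A → C` and `g : B → C`, is the ordered sum
`A ⊕ B`: the maximum of `A` is identified with the minimum of `B`, the order places `A`
below `B`, and every other relation symbol is interpreted by the union of its
interpretations. -/
structure IsOrderedSum2 (L : FirstOrder.Language) (le : L.Relations 2)
    (A B C : Type*) [L.Structure A] [L.Structure B] [L.Structure C]
    (mxA : A) (mnB : B) (f : A → C) (g : B → C) : Prop where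
  injf : Function.Injective f
  injg : Function.Injective g
  cover : ∀ c : C, (∃ a, f a = c) ∨ (∃ b, g b = c)
  glue : f mxA = g mnB
  overlap : ∀ a b, f a = g b → a = mxA ∧ b = mnB
  le_iff : ∀ c c' : C, rle le c c' ↔
      ((∃ a a', f a = c ∧ f a' = c' ∧ rle le a a') ∨
       (∃ b b', g b = c ∧ g b' = c' ∧ rle le b b') ∨
       (∃ a b, f a = c ∧ g b = c'))
  rel_iff : ∀ (m : ℕ) (r : L.Relations m) (v : Fin m → C), ¬(m = 2 ∧ HEq r le) →
      (Structure.RelMap r v ↔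
        (∃ w : Fin m → A, (∀ p, f (w p) = v p) ∧ Structure.RelMap r w) ∨
        (∃ w : Fin m → B, (∀ p, g (w p) = v p) ∧ Structure.RelMap r w))

/-- `C`, together with the inclusion maps `f i : M i → C`, is the iterated ordered sum
`⊕_{i} M i` (where `mn i`/`mx i` are the minimum/maximum of `M i`). -/
structure IsOrderedSumSeq (L : FirstOrder.Language) (le : L.Relations 2) (s : ℕ)
    (M : Fin s → Type*) [∀ i, L.Structure (M i)] (mn mx : ∀ i, M i)
    (C : Type*) [L.Structure C] (f : ∀ i, M i → C) : Prop where
  inj : ∀ i, Function.Injective (f i)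
  cover : ∀ c : C, ∃ i a, f i a = c
  glue : ∀ (i : Fin s) (h : i.1 + 1 < s), f i (mx i) = f ⟨i.1 + 1, h⟩ (mn ⟨i.1 + 1, h⟩)
  overlap : ∀ (i j : Fin s) (a : M i) (b : M j), i < j → f i a = f j b →
      j.1 = i.1 + 1 ∧ a = mx i ∧ b = mn j
  le_iff : ∀ c c' : C, rle le c c' ↔
      ((∃ i a b, f i a = c ∧ f i b = c' ∧ rle le a b) ∨
       (∃ i j a b, i < j ∧ f i a = c ∧ f j b = c'))
  rel_iff : ∀ (m : ℕ) (r : L.Relations m) (v : Fin m → C), ¬(m = 2 ∧ HEq r le) →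
      (Structure.RelMap r v ↔
        ∃ i, ∃ w : Fin m → M i, (∀ p, f i (w p) = v p) ∧ Structure.RelMap r w)

/-! ### The (n,k)-prefix Ehrenfeucht–Fraïssé game -/

/-- The history of the play before round `i`. -/
def histOf {A B : Type*} {k : ℕ} (n : ℕ) (a : Fin n → Fin k → A) (b : Fin n → Fin k → B)
    (i : Fin n) : List ((Fin k → A) × (Fin k → B)) :=
  List.ofFn (fun j : Fin i.1 => (a ⟨j.1, j.2.trans i.2⟩, b ⟨j.1, j.2.trans i.2⟩))

/-- A strategy for Duplicator: responses to Spoiler moves in `A` and in `B`,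
given the history of earlier rounds. -/
structure DupStrategy (L : FirstOrder.Language) (k : ℕ) (A B : Type*)
    [L.Structure A] [L.Structure B] where
  respB : List ((Fin k → A) × (Fin k → B)) → (Fin k → A) → (Fin k → B)
  respA : List ((Fin k → A) × (Fin k → B)) → (Fin k → B) → (Fin k → A)

/-- A play `(a, b)` of the `(n,k)`-prefix EF game is consistent with Duplicator's strategy:
in odd rounds (`i.1` even) Spoiler moves in `A` and Duplicator responds in `B`, in even
rounds Spoiler moves in `B` and Duplicator responds in `A`. -/
def DupStrategy.Consistent {A B : Type*} [L.Structure A] [L.Structure B] {k : ℕ}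
    (st : DupStrategy L k A B) (n : ℕ)
    (a : Fin n → Fin k → A) (b : Fin n → Fin k → B) : Prop :=
  ∀ i : Fin n,
    (i.1 % 2 = 0 → b i = st.respB (histOf n a b i) (a i)) ∧
    (i.1 % 2 = 1 → a i = st.respA (histOf n a b i) (b i))

/-- The map sending `a` pointwise to `b` is a partial isomorphism (for a relational
language). -/
def IsPartialIso (L : FirstOrder.Language) {ι : Type*} (A B : Type*)
    [L.Structure A] [L.Structure B] (a : ι → A) (b : ι → B) : Prop :=
  (∀ p q : ι, a p = a q ↔ b p = b q) ∧
    ∀ (m : ℕ) (r : L.Relations m) (v : Fin m → ι),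
      (Structure.RelMap r (a ∘ v) ↔ Structure.RelMap r (b ∘ v))

/-- Duplicator's strategy is winning in the `(n,k)`-prefix EF game. -/
def DupStrategy.Winning {A B : Type*} [L.Structure A] [L.Structure B] {k : ℕ}
    (st : DupStrategy L k A B) (n : ℕ) : Prop :=
  ∀ (a : Fin n → Fin k → A) (b : Fin n → Fin k → B), st.Consistent n a b →
    IsPartialIso L A B (fun p : Fin n × Fin k => a p.1 p.2) (fun p : Fin n × Fin k => b p.1 p.2)


/-! ### The vocabularies `σ_n` -/

/-- Indices `i` with `2 ≤ i ≤ n`, indexing the symbols `P_i, S_i, R_i` of `σ_n`. -/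
abbrev HighIdx (n : ℕ) : Type := {i : ℕ // 2 ≤ i ∧ i ≤ n}

/-- The vocabulary `σ_n`: binary symbols `≤, S, R` and `S_i, R_i` (for `2 ≤ i ≤ n`),
and unary symbols `P_i` (for `2 ≤ i ≤ n`).  In particular `σ_1` has exactly the three
binary symbols `≤, S, R`. -/
def sig (n : ℕ) : FirstOrder.Language where
  Functions := fun _ => Empty
  Relations := fun m =>
    match m with
    | 1 => HighIdx n
    | 2 => (Fin 3) ⊕ (HighIdx n × Bool)
    | _ => Empty

/-- The symbol `≤` of `σ_n`. -/
def leSym (n : ℕ) : (sig n).Relations 2 := Sum.inl 0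
/-- The symbol `S` of `σ_n`. -/
def sSym (n : ℕ) : (sig n).Relations 2 := Sum.inl 1
/-- The symbol `R` of `σ_n`. -/
def rSym (n : ℕ) : (sig n).Relations 2 := Sum.inl 2
/-- The symbol `S_i` of `σ_n`. -/
def snSym (n i : ℕ) (h : 2 ≤ i ∧ i ≤ n) : (sig n).Relations 2 := Sum.inr (⟨i, h⟩, false)
/-- The symbol `R_i` of `σ_n`. -/
def rnSym (n i : ℕ) (h : 2 ≤ i ∧ i ≤ n) : (sig n).Relations 2 := Sum.inr (⟨i, h⟩, true)
/-- The symbol `P_i` of `σ_n`. -/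
def pnSym (n i : ℕ) (h : 2 ≤ i ∧ i ≤ n) : (sig n).Relations 1 := ⟨i, h⟩

/-! ### Semantics of the sentences `SomeTotalR_n` -/

/-- A bundle of interpretations of all the symbols of the vocabularies `σ_n` over a
universe `A`. -/
structure Interp (A : Type*) where
  le : A → A → Prop
  S : A → A → Prop
  R : A → A → Prop
  Sn : ℕ → A → A → Prop
  Rn : ℕ → A → A → Prop
  Pn : ℕ → A → Prop

variable {A : Type*}

/-- `x < y` as an abbreviation for `x ≤ y ∧ x ≠ y`. -/
def Interp.lt (I : Interp A) (x y : A) : Prop := I.le x y ∧ x ≠ y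

/-- `STR I m D` is the meaning of the sentence `SomeTotalR_{m+1}` with all quantifiers
relativized to the set `D`.
For `m = 0`: `¬PartialSucc ∨ ∃ x y (R(x,y) ∧ Total(x,y))` where `PartialSucc` says that
`S(x,y)` implies `y` is the immediate `≤`-successor of `x`, and `Total(x,y)` says that
`x < y` and every `z` in `[x,y)` has an `S`-successor within `(z,y]`.
For `m+1` (i.e. `SomeTotalR_n`, `n = m+2`): the same with `S` replaced by
`Succ_n(x,y) := P_n(x) ∧ P_n(y) ∧ S_n(x,y) ∧ (SomeTotalR_{n-1})^{[x,y]}`, the quantifier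
in `PartialSucc_n` and `Total_n` relativized to `P_n`, and `R` replaced by `R_n`. -/
def STR (I : Interp A) : ℕ → (A → Prop) → Prop
  | 0, D =>
      (¬ ∀ x y, D x → D y → I.S x y →
          (I.lt x y ∧ ∀ z, D z → ¬(I.lt x z ∧ I.lt z y))) ∨
      ∃ x y, D x ∧ D y ∧ I.R x y ∧
        (I.lt x y ∧ ∀ z, D z → I.le x z → I.lt z y →
          ∃ w, D w ∧ I.lt z w ∧ I.le w y ∧ I.S z w)
  | m + 1, D =>
      let nn := m + 2
      let Succn : A → A → Prop := fun x y =>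
        I.Pn nn x ∧ I.Pn nn y ∧ I.Sn nn x y ∧
          (I.le x y ∧ STR I m (fun z => D z ∧ I.le x z ∧ I.le z y))
      (¬ ∀ x y, D x → D y → Succn x y →
          ∀ z, D z → I.Pn nn z → I.le z x ∨ I.le y z) ∨
      ∃ x y, D x ∧ D y ∧ I.Rn nn x y ∧
        (I.lt x y ∧ ∀ z, D z → I.Pn nn z → I.le x z → I.lt z y →
          ∃ w, D w ∧ I.lt z w ∧ I.le w y ∧ Succn z w)

/-- The meaning of the sentence `SomeTotalR_n` (for `n ≥ 1`). -/
def SomeTotalRSem (n : ℕ) (I : Interp A) : Prop :=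
  STR I (n - 1) (fun _ => True)

/-- The interpretation bundle determined by a `σ_n`-structure. -/
def interpOf (n : ℕ) (A : Type*) [(sig n).Structure A] : Interp A where
  le := fun x y => FirstOrder.Language.Structure.RelMap (leSym n) ![x, y]
  S := fun x y => FirstOrder.Language.Structure.RelMap (sSym n) ![x, y]
  R := fun x y => FirstOrder.Language.Structure.RelMap (rSym n) ![x, y]
  Sn := fun i x y => ∃ h : 2 ≤ i ∧ i ≤ n,
    FirstOrder.Language.Structure.RelMap (snSym n i h) ![x, y]
  Rn := fun i x y => ∃ h : 2 ≤ i ∧ i ≤ n,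
    FirstOrder.Language.Structure.RelMap (rnSym n i h) ![x, y]
  Pn := fun i x => ∃ h : 2 ≤ i ∧ i ≤ n,
    FirstOrder.Language.Structure.RelMap (pnSym n i h) ![x]

/-- The `σ_n`-structure determined by an interpretation bundle. -/
def strOf (n : ℕ) {A : Type*} (I : Interp A) : (sig n).Structure A where
  funMap := fun {m} f _ => Empty.elim f
  RelMap := fun {m} =>
    match m with
    | 0 => fun r _ => Empty.elim r
    | 1 => fun r v => I.Pn r.1 (v 0)
    | 2 => fun r v =>
        match r with
        | Sum.inl i =>
            if i = 0 then I.le (v 0) (v 1)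
            else if i = 1 then I.S (v 0) (v 1) else I.R (v 0) (v 1)
        | Sum.inr (j, b) => if b then I.Rn j.1 (v 0) (v 1) else I.Sn j.1 (v 0) (v 1)
    | _ + 3 => fun r _ => Empty.elim r

/-! ### Concrete construction of the structures `Tot_{n,k}`, `Gap_{n,k}`, `M_{n,k}`, `N_{n,k}` -/

/-- A finite ordered `σ`-interpretation with universe `{0, …, last}` (i.e. `Fin (last+1)`),
where `≤` is the natural linear order; the remaining relations are given as predicates on
the underlying natural numbers. -/
structure NInterp where
  last : ℕ
  S : ℕ → ℕ → Prop
  R : ℕ → ℕ → Prop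
  Sn : ℕ → ℕ → ℕ → Prop
  Rn : ℕ → ℕ → ℕ → Prop
  Pn : ℕ → ℕ → Prop

/-- The universe of an `NInterp`. -/
abbrev NInterp.Carrier (I : NInterp) : Type := Fin (I.last + 1)

/-- The interpretation bundle of an `NInterp`. -/
def NInterp.toInterp (I : NInterp) : Interp I.Carrier where
  le := fun x y => x ≤ y
  S := fun x y => I.S x.1 y.1
  R := fun x y => I.R x.1 y.1
  Sn := fun i x y => I.Sn i x.1 y.1
  Rn := fun i x y => I.Rn i x.1 y.1
  Pn := fun i x => I.Pn i x.1

/-- The ordered sum of two `NInterp`s: the maximum (`I.last`) of the first is identified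
with the minimum (`0`) of the second, and all relations other than `≤` are unions. -/
def glue2 (I J : NInterp) : NInterp where
  last := I.last + J.last
  S := fun x y => I.S x y ∨ ∃ a b, J.S a b ∧ x = I.last + a ∧ y = I.last + b
  R := fun x y => I.R x y ∨ ∃ a b, J.R a b ∧ x = I.last + a ∧ y = I.last + b
  Sn := fun i x y => I.Sn i x y ∨ ∃ a b, J.Sn i a b ∧ x = I.last + a ∧ y = I.last + b
  Rn := fun i x y => I.Rn i x y ∨ ∃ a b, J.Rn i a b ∧ x = I.last + a ∧ y = I.last + b
  Pn := fun i x => I.Pn i x ∨ ∃ a, J.Pn i a ∧ x = I.last + a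

/-- Iterated ordered sum `I ⊕ J₁ ⊕ ⋯ ⊕ Jₘ`. -/
def glueList : NInterp → List NInterp → NInterp
  | I, [] => I
  | I, J :: rest => glueList (glue2 I J) rest

/-- The ordered sum of `c` copies of `I` (for `c ≥ 1`). -/
def glueRep (I : NInterp) (c : ℕ) : NInterp :=
  glueList I (List.replicate (c - 1) I)

/-- `Tot_{1,k}` : universe of size `m = 6(k+2)²`, `S` the full successor relation,
`R = {(min, max)}`. -/
def Tot1 (k : ℕ) : NInterp where
  last := 6 * (k + 2) ^ 2 - 1
  S := fun x y => y = x + 1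
  R := fun x y => x = 0 ∧ y = 6 * (k + 2) ^ 2 - 1
  Sn := fun _ _ _ => False
  Rn := fun _ _ _ => False
  Pn := fun _ _ => False

/-- `Gap_{1,k}` : as `Tot_{1,k}` but with the central successor pair
`(m/2, m/2+1)` (1-indexed) removed from `S`. -/
def Gap1 (k : ℕ) : NInterp where
  last := 6 * (k + 2) ^ 2 - 1
  S := fun x y => y = x + 1 ∧ y ≠ 3 * (k + 2) ^ 2
  R := fun x y => x = 0 ∧ y = 6 * (k + 2) ^ 2 - 1
  Sn := fun _ _ _ => False
  Rn := fun _ _ _ => False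
  Pn := fun _ _ => False

/-- The expansion `A ↦ A⁺` from `σ_{n-1}` to `σ_n`: `P_n = {min, max}`,
`S_n = {(min, max)}`, `R_n = ∅`. -/
def plusN (n : ℕ) (I : NInterp) : NInterp where
  last := I.last
  S := I.S
  R := I.R
  Sn := fun i x y => I.Sn i x y ∨ (i = n ∧ x = 0 ∧ y = I.last)
  Rn := I.Rn
  Pn := fun i x => I.Pn i x ∨ (i = n ∧ (x = 0 ∨ x = I.last))

/-- Add the pair `(min, max)` to the relation `R_n`. -/
def addRn (n : ℕ) (I : NInterp) : NInterp :=
  { I with Rn := fun i x y => I.Rn i x y ∨ (i = n ∧ x = 0 ∧ y = I.last) }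

/-- `fam m k = (Tot_{m+1,k}, Gap_{m+1,k}, M_{m+1,k}, N_{m+1,k})`, by the inductive
construction:
* `N_{n,k}` is the ordered sum of `4(k+3)^{2n+1} + 2k + 1` copies of `Gap_{n,k}` and
  `M_{n,k}` is obtained from it by replacing the central copy with `Tot_{n,k}`;
* for `n ≥ 2`, `Tot_{n,k}` is obtained from the ordered sum of `4(k+3)^{2n} + 2k + 1`
  copies of `M⁺_{n-1,k}` by adding `(min, max)` to `R_n`, and `Gap_{n,k}` is obtained from
  it by replacing the central copy with `N⁺_{n-1,k}`. -/
def fam : ℕ → ℕ → NInterp × NInterp × NInterp × NInterp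
  | 0, k =>
      let T := Tot1 k
      let G := Gap1 k
      let half := 2 * (k + 3) ^ 3 + k
      (T, G,
        glueList (glueRep G half) (T :: List.replicate half G),
        glueRep G (4 * (k + 3) ^ 3 + 2 * k + 1))
  | m + 1, k =>
      let p := fam m k
      let nn := m + 2
      let Mp := plusN nn p.2.2.1
      let Np := plusN nn p.2.2.2
      let halfT := 2 * (k + 3) ^ (2 * nn) + k
      let T := addRn nn (glueRep Mp (4 * (k + 3) ^ (2 * nn) + 2 * k + 1))
      let G := addRn nn (glueList (glueRep Mp halfT) (Np :: List.replicate halfT Mp))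
      let halfN := 2 * (k + 3) ^ (2 * nn + 1) + k
      (T, G,
        glueList (glueRep G halfN) (T :: List.replicate halfN G),
        glueRep G (4 * (k + 3) ^ (2 * nn + 1) + 2 * k + 1))

/-- The structure `Tot_{n,k}`. -/
def TotNK (n k : ℕ) : NInterp := (fam (n - 1) k).1
/-- The structure `Gap_{n,k}`. -/
def GapNK (n k : ℕ) : NInterp := (fam (n - 1) k).2.1
/-- The structure `M_{n,k}`. -/
def MNK (n k : ℕ) : NInterp := (fam (n - 1) k).2.2.1
/-- The structure `N_{n,k}`. -/
def NNK (n k : ℕ) : NInterp := (fam (n - 1) k).2.2.2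

/-- The `σ_n`-structure on the universe of an `NInterp`. -/
def strOfN (n : ℕ) (I : NInterp) : (sig n).Structure I.Carrier :=
  strOf n I.toInterp



section Aux

variable {A B : Type} [(sig 1).Structure A] [(sig 1).Structure B]

lemma rel2_iff (emb : A ↪[sig 1] B) (r : (sig 1).Relations 2) (a b : A) :
    Structure.RelMap r ![emb a, emb b] ↔ Structure.RelMap r ![a, b] := by
  have h := emb.map_rel r ![a, b]
  have hc : (emb : A → B) ∘ ![a, b] = ![emb a, emb b] := by
    funext i; fin_cases i <;> rfl
  rwa [hc] at h

end Aux

/-- the class of finite ordered σ₁-structures satisfying `SomeTotalR_1` is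
closed under extensions within finite ordered structures. -/
theorem statement_6 (A B : Type) [(sig 1).Structure A] [(sig 1).Structure B]
    [Finite A] [Finite B]
    (hOA : IsOrderedLe (leSym 1) A) (hOB : IsOrderedLe (leSym 1) B)
    (emb : A ↪[sig 1] B)
    (h : SomeTotalRSem 1 (interpOf 1 A)) :
    SomeTotalRSem 1 (interpOf 1 B) := by
  classical
  -- abbreviations
  have hle : ∀ a b : A, (interpOf 1 A).le a b ↔ (interpOf 1 B).le (emb a) (emb b) :=
    fun a b => (rel2_iff emb (leSym 1) a b).symm
  have hS : ∀ a b : A, (interpOf 1 A).S a b ↔ (interpOf 1 B).S (emb a) (emb b) :=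
    fun a b => (rel2_iff emb (sSym 1) a b).symm
  have hR : ∀ a b : A, (interpOf 1 A).R a b ↔ (interpOf 1 B).R (emb a) (emb b) :=
    fun a b => (rel2_iff emb (rSym 1) a b).symm
  have hlt : ∀ a b : A, (interpOf 1 A).lt a b ↔ (interpOf 1 B).lt (emb a) (emb b) := by
    intro a b
    constructor
    · rintro ⟨h1, h2⟩; exact ⟨(hle a b).mp h1, fun he => h2 (emb.injective he)⟩
    · rintro ⟨h1, h2⟩; exact ⟨(hle a b).mpr h1, fun he => h2 (by rw [he])⟩
  unfold SomeTotalRSem STR at h ⊢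
  rcases h with hA | ⟨x, y, -, -, hRxy, hlxy, htot⟩
  · -- PartialSucc fails in A, hence in B
    push_neg at hA
    obtain ⟨x, y, -, -, hSxy, hbad⟩ := hA
    left
    intro hPSB
    obtain ⟨hltB, hnb⟩ := hPSB (emb x) (emb y) trivial trivial ((hS x y).mp hSxy)
    by_cases hxy : (interpOf 1 A).lt x y
    · obtain ⟨z, -, hz1, hz2⟩ := hbad hxy
      exact hnb (emb z) trivial ⟨(hlt x z).mp hz1, (hlt z y).mp hz2⟩
    · exact hxy ((hlt x y).mpr hltB)
  · -- the total-R case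
    by_cases hPSB : ∀ u v : B, (fun _ => True) u → (fun _ => True) v → (interpOf 1 B).S u v →
        ((interpOf 1 B).lt u v ∧ ∀ z : B, (fun _ => True) z →
          ¬((interpOf 1 B).lt u z ∧ (interpOf 1 B).lt z v))
    · right
      -- set up a linear order on B
      letI : LinearOrder B :=
        { le := (interpOf 1 B).le
          lt := fun u v => (interpOf 1 B).le u v ∧ u ≠ v
          le_refl := hOB.1
          le_trans := hOB.2.2.1
          le_antisymm := hOB.2.1
          le_total := hOB.2.2.2
          lt_iff_le_not_ge := by
            intro a b
            constructor
            · rintro ⟨h1, h2⟩; exact ⟨h1, fun h3 => h2 (hOB.2.1 a b h1 h3)⟩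
            · rintro ⟨h1, h2⟩; exact ⟨h1, fun he => h2 (he ▸ h1)⟩
          toDecidableLE := Classical.decRel _ }
      haveI : WellFoundedLT B := Finite.to_wellFoundedLT
      have ltB : ∀ u v : B, (interpOf 1 B).lt u v ↔ u < v := fun _ _ => Iff.rfl
      have leB : ∀ u v : B, (interpOf 1 B).le u v ↔ u ≤ v := fun _ _ => Iff.rfl
      -- covering claim: every element of [emb x, emb y] is in the image of [x,y]
      have claim : ∀ z : B, emb x ≤ z → z ≤ emb y →
          ∃ a : A, (interpOf 1 A).le x a ∧ (interpOf 1 A).le a y ∧ emb a = z := by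
        intro z
        induction z using WellFoundedLT.induction with
        | ind z IH =>
          intro hxz hzy
          by_cases hz : z = emb x
          · exact ⟨x, hOA.1 x, hlxy.1, hz.symm⟩
          · have hxz' : emb x < z := lt_of_le_of_ne hxz (Ne.symm hz)
            -- take the maximum of the image points below z
            set T : Set B := {m : B | emb x ≤ m ∧ m < z} with hT
            have hTne : T.Nonempty := ⟨emb x, le_refl _, hxz'⟩
            obtain ⟨m, hmT, hmax⟩ :=
              Set.Finite.exists_maximalFor id T (Set.toFinite T) hTne
            obtain ⟨hm1, hm2⟩ := hmT
            have hmfy : m < emb y := lt_of_lt_of_le hm2 hzy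
            obtain ⟨a, hxa, hay, hma⟩ := IH m hm2 hm1 (le_of_lt hmfy)
            have hany : a ≠ y := by
              rintro rfl
              exact (ne_of_lt hmfy) hma.symm
            have hlay : (interpOf 1 A).lt a y := ⟨hay, hany⟩
            obtain ⟨w, -, haw, hwy, hSaw⟩ := htot a trivial hxa hlay
            have hSB : (interpOf 1 B).S (emb a) (emb w) := (hS a w).mp hSaw
            obtain ⟨hltmw, hnb⟩ := hPSB (emb a) (emb w) trivial trivial hSB
            rw [hma] at hltmw hnb
            have hwz : emb w ≤ z := by
              by_contra hcon
              push_neg at hcon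
              exact hnb z trivial ⟨(ltB _ _).mpr hm2, (ltB _ _).mpr hcon⟩
            rcases lt_or_eq_of_le hwz with hwz' | hwz'
            · exfalso
              have hwT : emb w ∈ T :=
                ⟨le_trans hm1 (le_of_lt ((ltB m (emb w)).mp hltmw)), hwz'⟩
              have := hmax hwT (le_of_lt ((ltB m (emb w)).mp hltmw))
              simp only [id] at this
              exact absurd this (not_le_of_gt ((ltB m (emb w)).mp hltmw))
            · exact ⟨w, hOA.2.2.1 x a w hxa haw.1, hwy, hwz'⟩
      refine ⟨emb x, emb y, trivial, trivial, (hR x y).mp hRxy, (hlt x y).mp hlxy, ?_⟩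
      intro z _ hxz hzy
      obtain ⟨a, hxa, hay, rfl⟩ := claim z ((leB _ _).mp hxz) (le_of_lt ((ltB _ _).mp hzy))
      have hany : a ≠ y := fun he => ((ltB _ _).mp hzy).ne (by rw [he])
      obtain ⟨w, -, haw, hwy, hSaw⟩ := htot a trivial hxa ⟨hay, hany⟩
      exact ⟨emb w, trivial, (hlt a w).mp haw, (hle w y).mp hwy, (hS a w).mp hSaw⟩
    · left; exact hPSB


end Paper
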